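/- For $1<p<\infty$, the map $F(x) = \int_0^x (1-|s|^p)^{-1/p} ds$ is a strictly increasing homeomorphism from $[-1,1]$ onto $[-\pi_p/2, \pi_p/2]$, where $\pi_p = \frac{2\pi}{p\sin(\pi/p)}$. -/

import Mathlib

open MeasureTheory Real

/-- The generalized half-period `π_p = 2π/(p sin(π/p))`. -/
noncomputable def pPi (p : ℝ) : ℝ := 2 * Real.pi / (p * Real.sin (Real.pi / p))

/-- `F(x) = ∫₀ˣ (1-|s|^p)^{-1/p} ds`, the inverse of the `p`-sine function. -/
noncomputable def pF (p : ℝ) (x : ℝ) : ℝ := ∫ s in (0 : ℝ)..x, (1 - |s| ^ p) ^ (-1 / p)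

namespace PSineAux

open Set intervalIntegral

variable {p : ℝ}

lemma measurable_rpow_const (c : ℝ) : Measurable fun x : ℝ => x ^ c := by
  have heq : (fun x : ℝ => x ^ c) = fun x : ℝ =>
      if x = 0 then (0:ℝ) ^ c else
        if 0 < x then exp (log x * c) else exp (log x * c) * cos (c * π) := by
    ext x
    rcases lt_trichotomy x 0 with h | h | h
    · rw [if_neg h.ne, if_neg (not_lt.mpr h.le), rpow_def_of_neg h, mul_comm c π]
    · simp [h]
    · rw [if_neg h.ne', if_pos h, rpow_def_of_pos h]
  rw [heq]
  apply Measurable.ite (MeasurableSet.singleton 0) measurable_const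
  apply Measurable.ite measurableSet_Ioi
  · exact (Real.measurable_log.mul measurable_const).exp
  · exact ((Real.measurable_log.mul measurable_const).exp).mul measurable_const

lemma hmeas (p : ℝ) : Measurable fun s : ℝ => (1 - |s| ^ p) ^ (-1 / p) :=
  (measurable_rpow_const (-1/p)).comp
    (measurable_const.sub ((measurable_rpow_const p).comp measurable_abs))

lemma base_nonneg (hp : 1 < p) {s : ℝ} (hs : |s| ≤ 1) : 0 ≤ 1 - |s| ^ p := by
  have h := Real.rpow_le_one (x := |s|) (z := p) (abs_nonneg s) hs (by linarith)
  linarith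

lemma g_nonneg (hp : 1 < p) {s : ℝ} (hs : |s| ≤ 1) : 0 ≤ (1 - |s| ^ p) ^ (-1 / p) :=
  Real.rpow_nonneg (base_nonneg hp hs) _

lemma g_pos (hp : 1 < p) {s : ℝ} (hs : |s| < 1) : 0 < (1 - |s| ^ p) ^ (-1 / p) := by
  apply Real.rpow_pos_of_pos
  have h := Real.rpow_lt_one (x := |s|) (z := p) (abs_nonneg s) hs (by linarith)
  linarith

lemma int01 (hp : 1 < p) :
    IntervalIntegrable (fun s : ℝ => (1 - |s| ^ p) ^ (-1 / p)) volume 0 1 := by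
  have hp0 : 0 < p := by linarith
  have hr : (-1 : ℝ) < -1 / p := by
    rw [neg_div, neg_lt_neg_iff, div_lt_one hp0]
    exact hp
  have hcomp : IntervalIntegrable (fun s : ℝ => (1 - s) ^ (-1 / p)) volume 0 1 := by
    have h := (intervalIntegral.intervalIntegrable_rpow' (a := 1) (b := 0) hr).comp_sub_left 1
    simpa using h
  refine hcomp.mono_fun ((hmeas p).aestronglyMeasurable) ?_
  rw [uIoc_of_le zero_le_one]
  filter_upwards [ae_restrict_mem measurableSet_Ioc] with s hs
  have h0 : 0 < s := hs.1
  have h1 : s ≤ 1 := hs.2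
  have habs : |s| = s := abs_of_nonneg h0.le
  have hb1 : 0 ≤ 1 - |s| ^ p := base_nonneg hp (by rw [habs]; exact h1)
  have hb2 : 0 ≤ 1 - s := by linarith
  have hexp : (-1 : ℝ) / p ≤ 0 := by rw [neg_div]; exact neg_nonpos.mpr (by positivity)
  rw [Real.norm_eq_abs, Real.norm_eq_abs, abs_of_nonneg (Real.rpow_nonneg hb1 _),
    abs_of_nonneg (Real.rpow_nonneg hb2 _), habs]
  rcases eq_or_lt_of_le h1 with h1' | h1'
  · subst h1'
    simp [Real.one_rpow]
  · have hsp : s ^ p ≤ s := by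
      calc s ^ p ≤ s ^ (1 : ℝ) := Real.rpow_le_rpow_of_exponent_ge h0 h1 (by linarith)
        _ = s := Real.rpow_one s
    exact Real.rpow_le_rpow_of_nonpos (by linarith) (by linarith) hexp

lemma intAll (hp : 1 < p) :
    IntervalIntegrable (fun s : ℝ => (1 - |s| ^ p) ^ (-1 / p)) volume (-1) 1 := by
  have h1 := int01 hp
  have h2 : IntervalIntegrable (fun s : ℝ => (1 - |s| ^ p) ^ (-1 / p)) volume (-1) 0 := by
    have h := (IntervalIntegrable.iff_comp_neg (h := enorm_ne_top)).mp h1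
    simp only [abs_neg, neg_zero] at h
    exact h.symm
  exact h2.trans h1

lemma intSub (hp : 1 < p) {x y : ℝ} (hx : x ∈ Icc (-1:ℝ) 1) (hy : y ∈ Icc (-1:ℝ) 1) :
    IntervalIntegrable (fun s : ℝ => (1 - |s| ^ p) ^ (-1 / p)) volume x y := by
  refine (intAll hp).mono_set ?_
  rw [uIcc_of_le (show (-1:ℝ) ≤ 1 by norm_num)]
  exact uIcc_subset_Icc hx hy

lemma strict (hp : 1 < p) : StrictMonoOn (pF p) (Icc (-1:ℝ) 1) := by
  intro x hx y hy hxy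
  have h0 : (0:ℝ) ∈ Icc (-1:ℝ) 1 := by norm_num
  have key := intervalIntegral.integral_add_adjacent_intervals
    (intSub hp h0 hx) (intSub hp hx hy)
  have hpos : 0 < ∫ s in x..y, (1 - |s| ^ p) ^ (-1 / p) := by
    refine intervalIntegral_pos_of_pos_on (intSub hp hx hy) ?_ hxy
    intro s hs
    exact g_pos hp (abs_lt.mpr ⟨lt_of_le_of_lt hx.1 hs.1, lt_of_lt_of_le hs.2 hy.2⟩)
  have : pF p x + (∫ s in x..y, (1 - |s| ^ p) ^ (-1 / p)) = pF p y := key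
  rw [pF, pF]
  rw [pF, pF] at this
  linarith

lemma contF (hp : 1 < p) : ContinuousOn (pF p) (Icc (-1:ℝ) 1) := by
  have h := continuousOn_primitive_interval' (intAll hp)
    (show (0:ℝ) ∈ Set.uIcc (-1:ℝ) 1 by rw [uIcc_of_le (by norm_num : (-1:ℝ) ≤ 1)]; norm_num)
  rwa [uIcc_of_le (show (-1:ℝ) ≤ 1 by norm_num)] at h


lemma betaInt (hp : 1 < p) :
    IntervalIntegrable (fun t : ℝ => t ^ (1/p - 1) * (1 - t) ^ (-1/p)) volume 0 1 := by
  have hp0 : 0 < p := by linarith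
  set u : ℂ := ((1/p : ℝ) : ℂ) with hu_def
  have hure : u.re = 1/p := by simp [hu_def]
  have hu : 0 < u.re := by rw [hure]; positivity
  have hv : 0 < (1 - u).re := by
    simp only [Complex.sub_re, Complex.one_re, hure]
    rw [sub_pos, div_lt_one hp0]; exact hp
  have hC := (Complex.betaIntegral_convergent hu hv).norm
  have hm : Measurable fun t : ℝ => t ^ (1/p - 1) * (1 - t) ^ (-1/p) :=
    (measurable_rpow_const _).mul
      ((measurable_rpow_const _).comp (measurable_const.sub measurable_id))
  refine hC.mono_fun hm.aestronglyMeasurable ?_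
  rw [uIoc_of_le zero_le_one]
  filter_upwards [ae_restrict_mem measurableSet_Ioc] with t ht
  have h0 : 0 < t := ht.1
  have h1 : t ≤ 1 := ht.2
  rw [Real.norm_eq_abs, norm_norm]
  rcases eq_or_lt_of_le h1 with h1' | h1'
  · subst h1'
    have : (-1 : ℝ)/p ≠ 0 := by
      rw [neg_div]; exact neg_ne_zero.mpr (by positivity)
    simp [Real.zero_rpow this]
  · have hb : (0:ℝ) < 1 - t := by linarith
    have hcast : (1 - (t:ℂ)) = ((1 - t : ℝ) : ℂ) := by push_cast; ring
    rw [norm_mul, hcast,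
      Complex.norm_cpow_eq_rpow_re_of_pos h0, Complex.norm_cpow_eq_rpow_re_of_pos hb]
    have he1 : (u - 1).re = 1/p - 1 := by simp [hu_def]
    have he2 : (1 - u - 1).re = -1/p := by simp [hu_def]; rw [neg_div, one_div]
    rw [he1, he2]
    rw [abs_of_nonneg (mul_nonneg (Real.rpow_nonneg h0.le _) (Real.rpow_nonneg hb.le _))]

lemma beta_val (hp : 1 < p) :
    (∫ t in (0:ℝ)..1, t ^ (1/p - 1) * (1 - t) ^ (-1/p)) = π / Real.sin (π / p) := by
  have hp0 : 0 < p := by linarith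
  set u : ℂ := ((1/p : ℝ) : ℂ) with hu_def
  have hure : u.re = 1/p := by simp [hu_def]
  have hu : 0 < u.re := by rw [hure]; positivity
  have hv : 0 < (1 - u).re := by
    simp only [Complex.sub_re, Complex.one_re, hure]
    rw [sub_pos, div_lt_one hp0]; exact hp
  have h1 : Complex.Gamma u * Complex.Gamma (1 - u) = Complex.betaIntegral u (1 - u) := by
    have h := Complex.Gamma_mul_Gamma_eq_betaIntegral hu hv
    rwa [add_sub_cancel, Complex.Gamma_one, one_mul] at h
  have h2 := Complex.Gamma_mul_Gamma_one_sub u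
  have h3 : Complex.betaIntegral u (1 - u)
      = ((∫ t in (0:ℝ)..1, t ^ (1/p - 1) * (1 - t) ^ (-1/p) : ℝ) : ℂ) := by
    rw [Complex.betaIntegral, ← intervalIntegral.integral_ofReal]
    apply intervalIntegral.integral_congr
    intro x hx
    rw [uIcc_of_le zero_le_one] at hx
    have hx0 : (0:ℝ) ≤ x := hx.1
    have hx1 : (0:ℝ) ≤ 1 - x := by linarith [hx.2]
    show ((x:ℂ)) ^ (u - 1) * (1 - (x:ℂ)) ^ (1 - u - 1)
        = ((x ^ (1/p - 1) * (1 - x) ^ (-1/p) : ℝ) : ℂ)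
    have hcast : (1 - (x:ℂ)) = ((1 - x : ℝ) : ℂ) := by push_cast; ring
    rw [Complex.ofReal_mul, Complex.ofReal_cpow hx0, Complex.ofReal_cpow hx1, hcast]
    congr 1
    · congr 1
      rw [hu_def]; push_cast; ring
    · congr 1
      rw [hu_def]; push_cast; ring
  have hsin : Real.sin (π / p) ≠ 0 := by
    refine ne_of_gt (Real.sin_pos_of_pos_of_lt_pi ?_ ?_)
    · positivity
    · rw [div_lt_iff₀ hp0]
      nlinarith [Real.pi_pos]
  have h4 : ((∫ t in (0:ℝ)..1, t ^ (1/p - 1) * (1 - t) ^ (-1/p) : ℝ) : ℂ)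
      = ((π / Real.sin (π / p) : ℝ) : ℂ) := by
    rw [← h3, ← h1, h2]
    rw [Complex.ofReal_div, Complex.ofReal_sin]
    congr 2
    rw [hu_def]; push_cast; ring
  exact_mod_cast h4

lemma val_one (hp : 1 < p) : pF p 1 = pPi p / 2 := by
  have hp0 : 0 < p := by linarith
  set g₀ : ℝ → ℝ := fun t => (1/p) * (t ^ (1/p - 1) * (1 - t) ^ (-1/p)) with hg₀
  have hfc : ContinuousOn (fun x : ℝ => x ^ p) (Set.uIcc (0:ℝ) 1) :=
    continuousOn_id.rpow_const (fun x _ => Or.inr hp0.le)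
  have hder : ∀ x ∈ Ioo (min (0:ℝ) 1) (max (0:ℝ) 1),
      HasDerivWithinAt (fun x : ℝ => x ^ p) (p * x ^ (p-1)) (Set.Ioi x) x := fun x _ =>
    (Real.hasDerivAt_rpow_const (Or.inr hp.le)).hasDerivWithinAt
  have himg : ((fun x:ℝ => x ^ p) '' Ioo (min (0:ℝ) 1) (max (0:ℝ) 1)) ⊆ Ioo 0 1 := by
    rw [min_eq_left zero_le_one, max_eq_right zero_le_one]
    rintro _ ⟨x, hx, rfl⟩
    exact ⟨Real.rpow_pos_of_pos hx.1 _, Real.rpow_lt_one hx.1.le hx.2 hp0⟩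
  have hg₀cont : ContinuousOn g₀ (Ioo 0 1) := by
    apply continuousOn_const.mul
    apply ContinuousOn.mul
    · exact continuousOn_id.rpow_const fun x hx => Or.inl (ne_of_gt hx.1)
    · exact (continuousOn_const.sub continuousOn_id).rpow_const
        fun x hx => Or.inl (by simp only [Pi.sub_apply, id]; intro h; linarith [hx.2, sub_eq_zero.mp h])
  have himg2 : ((fun x:ℝ => x ^ p) '' Set.uIcc (0:ℝ) 1) ⊆ Icc 0 1 := by
    rw [uIcc_of_le zero_le_one]
    rintro _ ⟨x, hx, rfl⟩
    exact ⟨Real.rpow_nonneg hx.1 _, Real.rpow_le_one hx.1 hx.2 hp0.le⟩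
  have hInt0 : IntervalIntegrable g₀ volume 0 1 := (betaInt hp).const_mul _
  have hg1 : IntegrableOn g₀ ((fun x:ℝ => x ^ p) '' Set.uIcc (0:ℝ) 1) :=
    ((intervalIntegrable_iff_integrableOn_Icc_of_le zero_le_one).mp hInt0).mono_set himg2
  have hkey : ∀ x : ℝ, x ∈ Ioc (0:ℝ) 1 →
      (p * x ^ (p-1)) • ((g₀ ∘ fun x => x ^ p) x) = (1 - |x| ^ p) ^ (-1/p) := by
    intro x hx
    have hx0 : 0 < x := hx.1
    have habs : |x| = x := abs_of_nonneg hx0.le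
    have h1 : (x ^ p) ^ (1/p - 1) = x ^ (1 - p) := by
      rw [← Real.rpow_mul hx0.le]
      congr 1
      field_simp
    have h2 : x ^ (p - 1) * x ^ (1 - p) = 1 := by
      rw [← Real.rpow_add hx0]
      norm_num
    show (p * x ^ (p-1)) • ((1/p) * ((x ^ p) ^ (1/p - 1) * (1 - x ^ p) ^ (-1/p)))
        = (1 - |x| ^ p) ^ (-1/p)
    rw [smul_eq_mul, h1, habs]
    calc p * x ^ (p-1) * ((1/p) * (x ^ (1-p) * (1 - x^p) ^ (-1/p)))
        = (x ^ (p-1) * x ^ (1-p)) * (p * (1/p)) * (1 - x^p) ^ (-1/p) := by ring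
      _ = (1 - x^p) ^ (-1/p) := by
          rw [h2, mul_one_div, div_self hp0.ne', one_mul, one_mul]
  have haeeq : (fun x => (p * x ^ (p-1)) • ((g₀ ∘ fun x => x ^ p) x))
      =ᵐ[volume.restrict (Icc (0:ℝ) 1)] fun s => (1 - |s| ^ p) ^ (-1/p) := by
    have h0ae : ∀ᵐ x : ℝ ∂volume, x ≠ 0 := by
      refine ae_iff.mpr ?_
      simp only [ne_eq, not_not]
      have hset : {x : ℝ | x = 0} = {(0:ℝ)} := by ext x; simp
      rw [hset]
      exact measure_singleton 0
    filter_upwards [ae_restrict_of_ae h0ae, ae_restrict_mem measurableSet_Icc] with x hx0 hxI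
    exact hkey x ⟨lt_of_le_of_ne hxI.1 (Ne.symm hx0), hxI.2⟩
  have hg2 : IntegrableOn (fun x => (p * x ^ (p-1)) • ((g₀ ∘ fun x => x ^ p) x))
      (Set.uIcc (0:ℝ) 1) := by
    rw [uIcc_of_le zero_le_one]
    exact (((intervalIntegrable_iff_integrableOn_Icc_of_le zero_le_one).mp
      (int01 hp))).congr haeeq.symm
  have hsub := intervalIntegral.integral_comp_smul_deriv''' (a := 0) (b := 1)
    hfc hder (hg₀cont.mono himg) hg1 hg2
  rw [Real.zero_rpow hp0.ne', Real.one_rpow] at hsub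
  have hleft : (∫ x in (0:ℝ)..1, (p * x ^ (p-1)) • ((g₀ ∘ fun x => x ^ p) x)) = pF p 1 := by
    rw [pF]
    refine intervalIntegral.integral_congr_ae (ae_of_all _ fun x hx => ?_)
    rw [uIoc_of_le zero_le_one] at hx
    exact hkey x hx
  rw [hleft] at hsub
  rw [hsub, hg₀, intervalIntegral.integral_const_mul, beta_val hp, pPi]
  rw [div_mul_div_comm, one_mul]
  ring

lemma val_neg_one (hp : 1 < p) : pF p (-1) = -(pPi p) / 2 := by
  have h : pF p (-1) = -pF p 1 := by
    rw [pF, pF, intervalIntegral.integral_symm]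
    congr 1
    have h := intervalIntegral.integral_comp_neg
      (fun s : ℝ => (1 - |s| ^ p) ^ (-1/p)) (a := 0) (b := 1)
    simp only [abs_neg, neg_zero] at h
    exact h.symm
  rw [h, val_one hp]
  ring

end PSineAux

theorem stmt_1 (p : ℝ) (hp : 1 < p) :
    StrictMonoOn (pF p) (Set.Icc (-1 : ℝ) 1) ∧
    ∃ e : Set.Icc (-1 : ℝ) 1 ≃ₜ Set.Icc (-(pPi p) / 2) (pPi p / 2),
      ∀ x : Set.Icc (-1 : ℝ) 1, (e x : ℝ) = pF p (x : ℝ) := by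
  classical
  have hmono := PSineAux.strict hp
  have hcont := PSineAux.contF hp
  have hval1 : pF p 1 = pPi p / 2 := PSineAux.val_one hp
  have hvalm : pF p (-1) = -(pPi p) / 2 := PSineAux.val_neg_one hp
  refine ⟨hmono, ?_⟩
  have hmem1 : (-1:ℝ) ∈ Set.Icc (-1:ℝ) 1 := by norm_num
  have hmem2 : (1:ℝ) ∈ Set.Icc (-1:ℝ) 1 := by norm_num
  have hmaps : ∀ x : Set.Icc (-1:ℝ) 1,
      pF p (x : ℝ) ∈ Set.Icc (-(pPi p)/2) (pPi p/2) := by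
    intro x
    constructor
    · rw [← hvalm]
      exact hmono.monotoneOn hmem1 x.2 x.2.1
    · rw [← hval1]
      exact hmono.monotoneOn x.2 hmem2 x.2.2
  have hsurj : Set.SurjOn (pF p) (Set.Icc (-1:ℝ) 1) (Set.Icc (-(pPi p)/2) (pPi p/2)) := by
    have h := intermediate_value_Icc (show (-1:ℝ) ≤ 1 by norm_num) hcont
    rw [hval1, hvalm] at h
    exact h
  let F' : Set.Icc (-1:ℝ) 1 → Set.Icc (-(pPi p)/2) (pPi p/2) :=
    fun x => ⟨pF p x, hmaps x⟩
  have hFc : Continuous F' := Continuous.subtype_mk hcont.restrict _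
  have hbij : Function.Bijective F' := by
    constructor
    · intro a b hab
      exact Subtype.ext (hmono.injOn a.2 b.2 (congrArg Subtype.val hab))
    · rintro ⟨y, hy⟩
      obtain ⟨x, hx, hxy⟩ := hsurj hy
      exact ⟨⟨x, hx⟩, Subtype.ext hxy⟩
  let e0 : Set.Icc (-1:ℝ) 1 ≃ Set.Icc (-(pPi p)/2) (pPi p/2) := Equiv.ofBijective F' hbij
  have he0c : Continuous e0 := hFc
  exact ⟨Continuous.homeoOfEquivCompactToT2 (f := e0) he0c, fun x => rfl⟩
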